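/- Let A be a real m×d matrix, σ_y > 0, ν > 0, σ > 0, and let s_max > 0 be the largest singular value of A. Define ξ = (1/s_max²)·(ν - (s_max²/σ_y² + 1/ν)⁻¹), Σ = σ²·I - ((1/σ_y²) AᵀA + (1/ν)·I)⁻¹, and Σ̂ = (σ² - ν)·I + ξ·AᵀA. Then (i) Σ̂ v = Σ v for every v in the null space of A, and (ii) Σ̂ v = Σ v for every v ∈ ℝ^d satisfying AᵀA v = s_max² v. -/

import Mathlib

open Matrix

private lemma psd_smul {d : ℕ} {M : Matrix (Fin d) (Fin d) ℝ} (hM : M.PosSemidef)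
    {c : ℝ} (hc : 0 ≤ c) : (c • M).PosSemidef := by
  refine posSemidef_iff_dotProduct_mulVec.2 ⟨?_, fun x => ?_⟩
  · unfold Matrix.IsHermitian at *
    rw [conjTranspose_smul, hM.1]
    simp
  · rw [smul_mulVec, dotProduct_smul]
    simpa using mul_nonneg hc ((posSemidef_iff_dotProduct_mulVec.1 hM).2 x)

private lemma pd_smul_one {d : ℕ} {c : ℝ} (hc : 0 < c) :
    ((c • 1 : Matrix (Fin d) (Fin d) ℝ)).PosDef := by
  refine posDef_iff_dotProduct_mulVec.2 ⟨?_, fun x hx => ?_⟩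
  · unfold Matrix.IsHermitian
    rw [conjTranspose_smul]
    simp
  · rw [smul_mulVec, one_mulVec, dotProduct_smul]
    simp only [smul_eq_mul, RCLike.star_def]
    have : (0:ℝ) < star x ⬝ᵥ x := by
      simpa using (dotProduct_star_self_pos_iff (v := x)).2 hx
    exact mul_pos hc this

private lemma inv_mulVec_eigen {d : ℕ} {M : Matrix (Fin d) (Fin d) ℝ}
    (hM : IsUnit M.det) {v : Fin d → ℝ} {c : ℝ} (hc : c ≠ 0)
    (hv : M *ᵥ v = c • v) : M⁻¹ *ᵥ v = c⁻¹ • v := by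
  have h1 : M⁻¹ *ᵥ (M *ᵥ v) = v := by
    rw [mulVec_mulVec, Matrix.nonsing_inv_mul M hM, one_mulVec]
  rw [hv, mulVec_smul] at h1
  calc M⁻¹ *ᵥ v = c⁻¹ • (c • (M⁻¹ *ᵥ v)) := by rw [smul_smul, inv_mul_cancel₀ hc, one_smul]
    _ = c⁻¹ • v := by rw [h1]

/-- The SVD-free approximation `Σ̂ = (σ²-ν)I + ξAᵀA` of the renoising covariance
`Σ = σ²I - ((1/σ_y²)AᵀA + (1/ν)I)⁻¹` agrees with `Σ` (i) on the null space of `A` and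
(ii) on the eigenspace of `AᵀA` for the eigenvalue `s_max²`, where `s_max` is the largest
singular value of `A` and `ξ = (1/s_max²)(ν - (s_max²/σ_y² + 1/ν)⁻¹)`. -/
theorem sigma_hat_agrees_with_sigma
    (m d : ℕ) (A : Matrix (Fin m) (Fin d) ℝ)
    (σy ν σ smax : ℝ) (hσy : 0 < σy) (hν : 0 < ν) (hσ : 0 < σ) (hsmax : 0 < smax)
    (hgreatest : IsGreatest
      {t : ℝ | 0 ≤ t ∧ ∃ v : Fin d → ℝ, v ≠ 0 ∧ (Aᵀ * A) *ᵥ v = (t ^ 2) • v} smax)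
    (ξ : ℝ) (hξ : ξ = (1 / smax ^ 2) * (ν - (smax ^ 2 / σy ^ 2 + 1 / ν)⁻¹))
    (Sgm : Matrix (Fin d) (Fin d) ℝ)
    (hSgm : Sgm = σ ^ 2 • (1 : Matrix (Fin d) (Fin d) ℝ)
        - ((1 / σy ^ 2) • (Aᵀ * A) + (1 / ν) • (1 : Matrix (Fin d) (Fin d) ℝ))⁻¹)
    (SgmHat : Matrix (Fin d) (Fin d) ℝ)
    (hSgmHat : SgmHat = (σ ^ 2 - ν) • (1 : Matrix (Fin d) (Fin d) ℝ) + ξ • (Aᵀ * A)) :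
    (∀ v : Fin d → ℝ, A *ᵥ v = 0 → SgmHat *ᵥ v = Sgm *ᵥ v)
    ∧ (∀ v : Fin d → ℝ, (Aᵀ * A) *ᵥ v = smax ^ 2 • v → SgmHat *ᵥ v = Sgm *ᵥ v) := by
  set B : Matrix (Fin d) (Fin d) ℝ := Aᵀ * A with hB
  set M : Matrix (Fin d) (Fin d) ℝ :=
    (1 / σy ^ 2) • B + (1 / ν) • (1 : Matrix (Fin d) (Fin d) ℝ) with hM
  have hBpsd : B.PosSemidef := posSemidef_conjTranspose_mul_self A
  have hMpd : M.PosDef := by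
    refine Matrix.PosDef.posSemidef_add ?_ ?_
    · exact psd_smul hBpsd (by positivity)
    · exact pd_smul_one (by positivity)
  have hMdet : IsUnit M.det := hMpd.det_pos.ne'.isUnit
  -- eigenvector computation for M
  have key : ∀ (v : Fin d → ℝ) (lam : ℝ), B *ᵥ v = lam • v →
      M *ᵥ v = (lam / σy ^ 2 + 1 / ν) • v := by
    intro v lam hv
    rw [hM, add_mulVec, smul_mulVec, smul_mulVec, one_mulVec, hv,
      smul_smul, add_smul]
    ring_nf
  constructor
  · intro v hv
    have hBv : B *ᵥ v = 0 := by
      rw [hB, ← mulVec_mulVec, hv, mulVec_zero]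
    have hMv : M *ᵥ v = (1 / ν) • v := by
      have := key v 0 (by rw [hBv, zero_smul])
      simpa using this
    have hinv : M⁻¹ *ᵥ v = ν • v := by
      have := inv_mulVec_eigen hMdet (c := 1 / ν) (by positivity) hMv
      rwa [one_div, inv_inv] at this
    rw [hSgm, hSgmHat, sub_mulVec, add_mulVec, smul_mulVec, smul_mulVec,
      smul_mulVec, one_mulVec, hinv, hBv, smul_zero,
      add_zero, sub_smul]
  · intro v hv
    have hc : (0:ℝ) < smax ^ 2 / σy ^ 2 + 1 / ν := by positivity
    have hMv : M *ᵥ v = (smax ^ 2 / σy ^ 2 + 1 / ν) • v := key v (smax ^ 2) hv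
    have hinv : M⁻¹ *ᵥ v = (smax ^ 2 / σy ^ 2 + 1 / ν)⁻¹ • v :=
      inv_mulVec_eigen hMdet hc.ne' hMv
    rw [hSgm, hSgmHat, sub_mulVec, add_mulVec, smul_mulVec, smul_mulVec,
      smul_mulVec, one_mulVec, hinv, hv, smul_smul, ← add_smul, ← sub_smul]
    congr 1
    rw [hξ]
    field_simp
    ring
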